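/- Fix an integer r ≥ 1. For ε ∈ (0,1) let W(Q;ε) = exp(−Q²/ε) for Q > 0; its inverse is 𝒬(w;ε) = √(ε ln(1/w)) for w ∈ (0,1). Set ν(ε) := (ε / ln(1/ε))^{1/(2(r+2))}, δ(ε) := √((r+2) ε ln(1/ε)), and η(ε) := 𝒬(ν(ε);ε). Then there exist C > 0 and ε₀ ∈ (0,1) such that for all ε ∈ (0,ε₀): M^{(r)}(ν(ε);ε) ≤ C ν(ε), max_{1 ≤ l ≤ r+1} |∂_Q^l W(Q;ε)|_{Q = δ(ε)} ≤ C ν(ε), and η(ε) ≤ √(ε ln(1/ε)). In particular ν(ε), δ(ε), η(ε) → 0 as ε → 0. -/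

import Mathlib

open Set Filter Topology

/-- `M^{(r)}(ν;ε)`: the supremum of `|∂_w^l 𝒬(w)|` over `ν ≤ w ≤ 1/2` and `0 ≤ l ≤ r+1`. -/
noncomputable def Mbig (Qinv : ℝ → ℝ) (r : ℕ) (ν : ℝ) : ℝ :=
  sSup {y : ℝ | ∃ l ≤ r + 1, ∃ w ∈ Set.Icc ν (1/2 : ℝ), y = |iteratedDeriv l Qinv w|}

/-- The inverse barrier function `𝒬(w;ε) = √(ε ln(1/w))` of the Gaussian barrier. -/
noncomputable def gaussQinv (ε : ℝ) : ℝ → ℝ := fun w => Real.sqrt (ε * Real.log (1 / w))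

/-- The Gaussian barrier function `W(Q;ε) = e^{-Q²/ε}`. -/
noncomputable def gaussW (ε : ℝ) : ℝ → ℝ := fun Q => Real.exp (-Q ^ 2 / ε)

/-- `ν(ε) = (ε / ln(1/ε))^{1/(2(r+2))}`. -/
noncomputable def nuGauss (r : ℕ) (ε : ℝ) : ℝ :=
  (ε / Real.log (1 / ε)) ^ ((1 : ℝ) / (2 * (r + 2)))

/-- `δ(ε) = √((r+2) ε ln(1/ε))`. -/
noncomputable def deltaGauss (r : ℕ) (ε : ℝ) : ℝ :=
  Real.sqrt (((r : ℝ) + 2) * ε * Real.log (1 / ε))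

/-- `η(ε) = 𝒬(ν(ε);ε)`. -/
noncomputable def etaGauss (r : ℕ) (ε : ℝ) : ℝ := gaussQinv ε (nuGauss r ε)

section AuxStmt7
open Polynomial

lemma tendsto_key (a b : ℝ) (ha : 0 < a) :
    Tendsto (fun ε : ℝ => ε ^ a * (Real.log (1/ε)) ^ b) (𝓝[>] (0:ℝ)) (𝓝 0) := by
  have h := ((isLittleO_log_rpow_rpow_atTop b ha).tendsto_div_nhds_zero).comp
    tendsto_inv_nhdsGT_zero
  apply h.congr'
  filter_upwards [self_mem_nhdsWithin] with ε (hε : 0 < ε)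
  simp only [Function.comp_apply, Real.log_inv, one_div]
  rw [Real.inv_rpow hε.le, div_inv_eq_mul, mul_comm]

lemma abs_eval_le (p : Polynomial ℝ) (x : ℝ) (hx : |x| ≤ 2) :
    |p.eval x| ≤ ∑ j ∈ Finset.range (p.natDegree+1), |p.coeff j| * 2^j := by
  rw [Polynomial.eval_eq_sum_range]
  refine le_trans (Finset.abs_sum_le_sum_abs _ _) ?_
  refine Finset.sum_le_sum fun j _ => ?_
  rw [abs_mul, abs_pow]
  exact mul_le_mul_of_nonneg_left (pow_le_pow_left₀ (abs_nonneg x) hx j) (abs_nonneg _)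

lemma abs_eval_le_of_one_le (p : Polynomial ℝ) (t : ℝ) (ht : 1 ≤ t) (m : ℕ)
    (hm : p.natDegree ≤ m) :
    |p.eval t| ≤ (∑ j ∈ Finset.range (p.natDegree+1), |p.coeff j|) * t^m := by
  rw [Polynomial.eval_eq_sum_range, Finset.sum_mul]
  refine le_trans (Finset.abs_sum_le_sum_abs _ _) ?_
  refine Finset.sum_le_sum fun j hj => ?_
  rw [abs_mul, abs_pow, abs_of_nonneg (by linarith : (0:ℝ) ≤ t)]
  refine mul_le_mul_of_nonneg_left ?_ (abs_nonneg _)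
  exact pow_le_pow_right₀ ht (le_trans (Nat.lt_succ_iff.mp (Finset.mem_range.mp hj)) hm)

noncomputable def qp : ℕ → Polynomial ℝ
  | 0 => C (-(1/2) : ℝ)
  | (k+1) => X^2 * (qp k).derivative + (C (1/2:ℝ) * X - C ((k:ℝ)+1)) * qp k

lemma hasDerivAt_qpF {ε : ℝ} (hε : 0 < ε) (k : ℕ) {w : ℝ} (hw : w ∈ Set.Ioo (0:ℝ) 1) :
    HasDerivAt
      (fun w => Real.sqrt ε * (qp k).eval (-Real.log w)⁻¹ / (w^(k+1) * Real.sqrt (-Real.log w)))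
      (Real.sqrt ε * (qp (k+1)).eval (-Real.log w)⁻¹ / (w^(k+2) * Real.sqrt (-Real.log w))) w := by
  obtain ⟨hw0, hw1⟩ := hw
  have hu : 0 < -Real.log w := by
    have := Real.log_neg hw0 hw1; linarith
  set u : ℝ := -Real.log w with hu_def
  have hs : 0 < Real.sqrt u := Real.sqrt_pos.mpr hu
  have hsq : Real.sqrt u ^ 2 = u := Real.sq_sqrt hu.le
  -- derivatives of components
  have hU : HasDerivAt (fun w : ℝ => -Real.log w) (-w⁻¹) w := (Real.hasDerivAt_log hw0.ne').neg
  have hX : HasDerivAt (fun w : ℝ => (-Real.log w)⁻¹) (-(-w⁻¹) / u^2) w := hU.inv hu.ne'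
  have hEval : HasDerivAt (fun w : ℝ => (qp k).eval (-Real.log w)⁻¹)
      ((qp k).derivative.eval u⁻¹ * (-(-w⁻¹) / u^2)) w :=
    (Polynomial.hasDerivAt (qp k) _).comp w hX
  have hSqrt : HasDerivAt (fun w : ℝ => Real.sqrt (-Real.log w))
      (1 / (2 * Real.sqrt u) * (-w⁻¹)) w :=
    (Real.hasDerivAt_sqrt hu.ne').comp w hU
  have hPow : HasDerivAt (fun w : ℝ => w^(k+1)) ((k+1 : ℕ) * w^k) w := by
    simpa using hasDerivAt_pow (k+1) w
  have hDen : HasDerivAt (fun w : ℝ => w^(k+1) * Real.sqrt (-Real.log w))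
      ((k+1 : ℕ) * w^k * Real.sqrt u + w^(k+1) * (1 / (2 * Real.sqrt u) * (-w⁻¹))) w :=
    hPow.mul hSqrt
  have hNum : HasDerivAt (fun w : ℝ => Real.sqrt ε * (qp k).eval (-Real.log w)⁻¹)
      (Real.sqrt ε * ((qp k).derivative.eval u⁻¹ * (-(-w⁻¹) / u^2))) w := hEval.const_mul _
  have hden_ne : w^(k+1) * Real.sqrt u ≠ 0 := by positivity
  have H := hNum.div hDen hden_ne
  refine H.congr_deriv ?_
  symm
  have heval : (qp (k+1)).eval u⁻¹
      = (u⁻¹)^2 * (qp k).derivative.eval u⁻¹ + ((1/2) * u⁻¹ - ((k:ℝ)+1)) * (qp k).eval u⁻¹ := by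
    simp [qp]
  rw [heval]
  have hrw : (-Real.log w)⁻¹ = u⁻¹ := rfl
  rw [hrw]
  set A := (qp k).eval u⁻¹ with hA
  set B := (qp k).derivative.eval u⁻¹ with hB
  set s := Real.sqrt u with hs_def
  have hu_eq : u = s^2 := hsq.symm
  rw [hu_eq]
  field_simp
  push_cast
  ring

lemma hasDerivAt_gaussQinv {ε : ℝ} (hε : 0 < ε) {w : ℝ} (hw : w ∈ Set.Ioo (0:ℝ) 1) :
    HasDerivAt (gaussQinv ε)
      (Real.sqrt ε * (qp 0).eval (-Real.log w)⁻¹ / (w^1 * Real.sqrt (-Real.log w))) w := by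
  obtain ⟨hw0, hw1⟩ := hw
  have hu : 0 < -Real.log w := by have := Real.log_neg hw0 hw1; linarith
  have hU : HasDerivAt (fun w : ℝ => ε * -Real.log w) (ε * -w⁻¹) w :=
    ((Real.hasDerivAt_log hw0.ne').neg).const_mul ε
  have hunz : ε * -Real.log w ≠ 0 := by positivity
  have H : HasDerivAt (fun w : ℝ => Real.sqrt (ε * -Real.log w))
      (1 / (2 * Real.sqrt (ε * -Real.log w)) * (ε * -w⁻¹)) w :=
    (Real.hasDerivAt_sqrt hunz).comp w hU
  have hfun : gaussQinv ε = fun w : ℝ => Real.sqrt (ε * -Real.log w) := by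
    funext v; simp [gaussQinv, one_div, Real.log_inv]
  rw [hfun]
  convert H using 1
  have h1 : Real.sqrt (ε * -Real.log w) = Real.sqrt ε * Real.sqrt (-Real.log w) :=
    Real.sqrt_mul hε.le _
  have hse : Real.sqrt ε > 0 := Real.sqrt_pos.mpr hε
  have hsu : Real.sqrt (-Real.log w) > 0 := Real.sqrt_pos.mpr hu
  have heps : Real.sqrt ε ^ 2 = ε := Real.sq_sqrt hε.le
  rw [h1]
  have : (qp 0).eval (-Real.log w)⁻¹ = -(1/2) := by simp [qp]
  rw [this]
  field_simp
  linear_combination -heps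

lemma iteratedDeriv_gaussQinv {ε : ℝ} (hε : 0 < ε) (k : ℕ) :
    ∀ w ∈ Set.Ioo (0:ℝ) 1, iteratedDeriv (k+1) (gaussQinv ε) w
      = Real.sqrt ε * (qp k).eval (-Real.log w)⁻¹ / (w^(k+1) * Real.sqrt (-Real.log w)) := by
  induction k with
  | zero =>
    intro w hw
    rw [iteratedDeriv_one]
    exact (hasDerivAt_gaussQinv hε hw).deriv
  | succ k ih =>
    intro w hw
    rw [iteratedDeriv_succ]
    have hev : iteratedDeriv (k+1) (gaussQinv ε)
        =ᶠ[𝓝 w] fun w => Real.sqrt ε * (qp k).eval (-Real.log w)⁻¹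
          / (w^(k+1) * Real.sqrt (-Real.log w)) := by
      filter_upwards [isOpen_Ioo.mem_nhds hw] with v hv
      exact ih v hv
    rw [hev.deriv_eq]
    exact (hasDerivAt_qpF hε k hw).deriv

noncomputable def hpPoly : ℕ → Polynomial ℝ
  | 0 => 1
  | (l+1) => (hpPoly l).derivative - C (2:ℝ) * X * hpPoly l

lemma natDegree_hpPoly (l : ℕ) : (hpPoly l).natDegree ≤ l := by
  induction l with
  | zero => simp [hpPoly]
  | succ l ih =>
    refine le_trans (Polynomial.natDegree_sub_le _ _) (max_le ?_ ?_)
    · exact le_trans (Polynomial.natDegree_derivative_le _) (by omega)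
    · refine le_trans (Polynomial.natDegree_mul_le) ?_
      have : (C (2:ℝ) * X).natDegree ≤ 1 := by
        refine le_trans (Polynomial.natDegree_mul_le) ?_
        simp
      omega

lemma hasDerivAt_hpF (l : ℕ) {s : ℝ} (hs : s ≠ 0) (Q : ℝ) :
    HasDerivAt (fun Q : ℝ => s⁻¹^l * (hpPoly l).eval (Q/s) * Real.exp (-(Q/s)^2))
      (s⁻¹^(l+1) * (hpPoly (l+1)).eval (Q/s) * Real.exp (-(Q/s)^2)) Q := by
  have hQs : HasDerivAt (fun Q : ℝ => Q/s) s⁻¹ Q := by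
    simpa [div_eq_mul_inv] using (hasDerivAt_id Q).div_const s
  have hEval : HasDerivAt (fun Q : ℝ => (hpPoly l).eval (Q/s))
      ((hpPoly l).derivative.eval (Q/s) * s⁻¹) Q :=
    (Polynomial.hasDerivAt _ _).comp Q hQs
  have hNeg : HasDerivAt (fun Q : ℝ => -(Q/s)^2) (-(2 * (Q/s)^1 * s⁻¹)) Q := by
    exact ((hQs.pow 2).neg).congr_deriv (by push_cast; ring)
  have hExp : HasDerivAt (fun Q : ℝ => Real.exp (-(Q/s)^2))
      (Real.exp (-(Q/s)^2) * -(2 * (Q/s)^1 * s⁻¹)) Q :=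
    (Real.hasDerivAt_exp _).comp Q hNeg
  have H := ((hEval.const_mul (s⁻¹^l)).mul hExp)
  refine H.congr_deriv ?_
  symm
  have : (hpPoly (l+1)).eval (Q/s)
      = (hpPoly l).derivative.eval (Q/s) - 2 * (Q/s) * (hpPoly l).eval (Q/s) := by
    simp [hpPoly]
  rw [this]
  ring

lemma iteratedDeriv_gaussW {ε : ℝ} (hε : 0 < ε) (l : ℕ) (Q : ℝ) :
    iteratedDeriv l (gaussW ε) Q
      = (Real.sqrt ε)⁻¹^l * (hpPoly l).eval (Q / Real.sqrt ε)
        * Real.exp (-(Q / Real.sqrt ε)^2) := by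
  have hse : (0:ℝ) < Real.sqrt ε := Real.sqrt_pos.mpr hε
  have hfun : gaussW ε = fun Q : ℝ =>
      (Real.sqrt ε)⁻¹^0 * (hpPoly 0).eval (Q / Real.sqrt ε)
        * Real.exp (-(Q / Real.sqrt ε)^2) := by
    funext Q
    have : (Q / Real.sqrt ε)^2 = Q^2 / ε := by
      rw [div_pow, Real.sq_sqrt hε.le]
    simp [gaussW, hpPoly, this, neg_div]
  induction l generalizing Q with
  | zero => rw [iteratedDeriv_zero, hfun]
  | succ l ih =>
    rw [iteratedDeriv_succ]
    have : iteratedDeriv l (gaussW ε) = fun Q : ℝ =>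
        (Real.sqrt ε)⁻¹^l * (hpPoly l).eval (Q / Real.sqrt ε)
          * Real.exp (-(Q / Real.sqrt ε)^2) := funext ih
    rw [this]
    exact (hasDerivAt_hpF l hse.ne' Q).deriv

lemma mono_wu (l : ℕ) (hl : 1 ≤ l) :
    StrictMonoOn (fun w : ℝ => w^(2*l) * (-Real.log w)) (Set.Ioc (0:ℝ) (1/2)) := by
  have h2 : interior (Set.Ioc (0:ℝ) (1/2)) = Set.Ioo (0:ℝ) (1/2) := interior_Ioc
  refine strictMonoOn_of_deriv_pos (convex_Ioc _ _) ?_ ?_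
  · refine ContinuousOn.mul (by fun_prop) ?_
    exact (Real.continuousOn_log.mono (by intro x hx; exact ne_of_gt hx.1)).neg
  · intro w hw
    rw [h2] at hw
    obtain ⟨hw0, hw12⟩ := hw
    have hD : HasDerivAt (fun w : ℝ => w^(2*l) * (-Real.log w))
        ((2*l : ℕ) * w^(2*l-1) * (-Real.log w) + w^(2*l) * (-w⁻¹)) w :=
      (hasDerivAt_pow (2*l) w).mul (Real.hasDerivAt_log hw0.ne').neg
    rw [hD.deriv]
    have hlog2 : Real.log 2 ≤ -Real.log w := by
      rw [← Real.log_inv]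
      apply Real.log_le_log (by norm_num)
      rw [le_inv_comm₀ (by norm_num) hw0]
      linarith
    have hl2 : (0.6931471803 : ℝ) < Real.log 2 := Real.log_two_gt_d9
    have hp : (0:ℝ) < w^(2*l-1) := pow_pos hw0 _
    have hwpow : w^(2*l) * w⁻¹ = w^(2*l-1) := by
      rw [← pow_sub_one_mul (by omega : 2*l ≠ 0) w]
      field_simp
    have hcast : ((2*l : ℕ) : ℝ) ≥ 2 := by
      have : (2:ℕ) ≤ 2*l := by omega
      exact_mod_cast this
    have hlogpos : 0 < -Real.log w := by linarith
    nlinarith [mul_pos hp hlogpos, hwpow]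

lemma ev_Ioo : ∀ᶠ ε in 𝓝[>] (0:ℝ), ε ∈ Set.Ioo (0:ℝ) (Real.exp (-1)) :=
  Ioo_mem_nhdsGT_of_mem ⟨le_refl 0, Real.exp_pos _⟩

lemma basic_facts {ε : ℝ} (hε : ε ∈ Set.Ioo (0:ℝ) (Real.exp (-1))) :
    0 < ε ∧ ε < 1 ∧ 1 ≤ Real.log (1/ε) := by
  obtain ⟨hε0, hεe⟩ := hε
  have he1 : Real.exp (-1) < 1 := by
    rw [Real.exp_lt_one_iff]; norm_num
  refine ⟨hε0, lt_trans hεe he1, ?_⟩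
  rw [one_div]
  have : Real.exp 1 ≤ ε⁻¹ := by
    rw [le_inv_comm₀ (Real.exp_pos 1) hε0]
    rw [Real.exp_neg] at hεe
    exact hεe.le
  calc (1:ℝ) = Real.log (Real.exp 1) := (Real.log_exp 1).symm
  _ ≤ Real.log ε⁻¹ := Real.log_le_log (Real.exp_pos 1) this

lemma nu_eq {r : ℕ} {ε : ℝ} (hε0 : 0 < ε) (hL0 : 0 < Real.log (1/ε)) :
    nuGauss r ε = ε ^ ((1:ℝ)/(2*(r+2))) * (Real.log (1/ε)) ^ (-((1:ℝ)/(2*(r+2)))) := by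
  rw [nuGauss, Real.div_rpow hε0.le hL0.le, Real.rpow_neg hL0.le, div_eq_mul_inv]

lemma nu_tendsto (r : ℕ) : Tendsto (nuGauss r) (𝓝[>] (0:ℝ)) (𝓝 0) := by
  have hc : (0:ℝ) < 1/(2*(r+2)) := by positivity
  refine (tendsto_key (1/(2*(r+2))) (-(1/(2*(r+2)))) hc).congr' ?_
  filter_upwards [ev_Ioo] with ε hε
  obtain ⟨hε0, hε1, hL1⟩ := basic_facts hε
  exact (nu_eq hε0 (by linarith)).symm

lemma epsL_tendsto : Tendsto (fun ε : ℝ => ε * Real.log (1/ε)) (𝓝[>] (0:ℝ)) (𝓝 0) := by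
  refine (tendsto_key 1 1 one_pos).congr' ?_
  filter_upwards [self_mem_nhdsWithin] with ε (hε : 0 < ε)
  rw [Real.rpow_one, Real.rpow_one]

lemma sqrt_epsL_tendsto :
    Tendsto (fun ε : ℝ => Real.sqrt (ε * Real.log (1/ε))) (𝓝[>] (0:ℝ)) (𝓝 0) := by
  have h := (Real.continuous_sqrt.tendsto 0).comp epsL_tendsto
  simpa [Function.comp_def] using h

lemma delta_tendsto (r : ℕ) : Tendsto (deltaGauss r) (𝓝[>] (0:ℝ)) (𝓝 0) := by
  have h := (epsL_tendsto.const_mul (((r:ℝ)+2))).congr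
    (fun ε => by ring : ∀ ε : ℝ, ((r:ℝ)+2) * (ε * Real.log (1/ε)) = ((r:ℝ)+2) * ε * Real.log (1/ε))
  rw [mul_zero] at h
  have h2 := (Real.continuous_sqrt.tendsto 0).comp h
  have : deltaGauss r = (fun x => Real.sqrt x) ∘ (fun ε => ((r:ℝ)+2) * ε * Real.log (1/ε)) := by
    funext ε; simp [deltaGauss, Function.comp]
  rw [this]
  simpa using h2

noncomputable def Kq (r : ℕ) : ℝ :=
  ∑ k ∈ Finset.range (r+1), ∑ j ∈ Finset.range ((qp k).natDegree+1), |(qp k).coeff j| * 2^j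

noncomputable def Kp (r : ℕ) : ℝ :=
  ∑ l ∈ Finset.range (r+2), ∑ j ∈ Finset.range ((hpPoly l).natDegree+1), |(hpPoly l).coeff j|

noncomputable def Cc (r : ℕ) : ℝ := (Kq r + 1) * Real.sqrt (2*(r+2)) + 1

lemma Kq_nonneg (r : ℕ) : 0 ≤ Kq r :=
  Finset.sum_nonneg fun k _ => Finset.sum_nonneg fun j _ => by positivity

lemma Kp_nonneg (r : ℕ) : 0 ≤ Kp r :=
  Finset.sum_nonneg fun k _ => Finset.sum_nonneg fun j _ => abs_nonneg _

lemma Cc_pos (r : ℕ) : 0 < Cc r := by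
  have h := Kq_nonneg r
  have hs : (1:ℝ) ≤ Real.sqrt (2*(r+2)) := by
    rw [Real.one_le_sqrt]; push_cast; nlinarith [Nat.cast_nonneg (α := ℝ) r]
  unfold Cc; nlinarith

lemma one_le_Cc (r : ℕ) : 1 ≤ Cc r := by
  have h := Kq_nonneg r
  have hs : (1:ℝ) ≤ Real.sqrt (2*(r+2)) := by
    rw [Real.one_le_sqrt]; push_cast; nlinarith [Nat.cast_nonneg (α := ℝ) r]
  unfold Cc; nlinarith

lemma nu_facts (r : ℕ) {ε : ℝ} (hε0 : 0 < ε) (hL1 : 1 ≤ Real.log (1/ε)) :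
    0 < nuGauss r ε
    ∧ Real.log (1/ε) / (2*((r:ℝ)+2)) ≤ Real.log (1/(nuGauss r ε))
    ∧ Real.log (1/(nuGauss r ε)) ≤ Real.log (1/ε) := by
  set L := Real.log (1/ε) with hL_def
  have hL0 : 0 < L := by linarith
  have hν0 : 0 < nuGauss r ε := Real.rpow_pos_of_pos (div_pos hε0 hL0) _
  have hlog : Real.log (nuGauss r ε) = (1/(2*((r:ℝ)+2))) * (Real.log ε - Real.log L) := by
    rw [nuGauss, Real.log_rpow (div_pos hε0 hL0), Real.log_div hε0.ne' hL0.ne']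
  have hLeq : Real.log ε = -L := by
    rw [hL_def, one_div, Real.log_inv, neg_neg]
  have hlogL0 : 0 ≤ Real.log L := Real.log_nonneg hL1
  have hlogLL : Real.log L ≤ L := le_trans (Real.log_le_sub_one_of_pos hL0) (by linarith)
  have hr2 : (0:ℝ) < 2*((r:ℝ)+2) := by positivity
  have hmain : Real.log (1/(nuGauss r ε))
      = (1/(2*((r:ℝ)+2))) * (Real.log L + L) := by
    rw [one_div, Real.log_inv, hlog, hLeq]; ring
  refine ⟨hν0, ?_, ?_⟩
  · rw [hmain, div_eq_mul_one_div L, mul_comm L]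
    exact mul_le_mul_of_nonneg_left (by linarith) (by positivity)
  · rw [hmain]
    have h1 : (1/(2*((r:ℝ)+2))) * (Real.log L + L) ≤ (1/(2*((r:ℝ)+2))) * (2*L) :=
      mul_le_mul_of_nonneg_left (by linarith) (by positivity)
    refine le_trans h1 ?_
    rw [show (1/(2*((r:ℝ)+2))) * (2*L) = L / ((r:ℝ)+2) by field_simp]
    exact div_le_self hL0.le (by push_cast; linarith [Nat.cast_nonneg (α := ℝ) r])

lemma eta_le (r : ℕ) {ε : ℝ} (hε0 : 0 < ε) (hL1 : 1 ≤ Real.log (1/ε)) :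
    etaGauss r ε ≤ Real.sqrt (ε * Real.log (1/ε)) := by
  obtain ⟨hν0, h1, h2⟩ := nu_facts r hε0 hL1
  exact Real.sqrt_le_sqrt (mul_le_mul_of_nonneg_left h2 hε0.le)

lemma nu_pow_r2 (r : ℕ) {ε : ℝ} (hε0 : 0 < ε) (hL0 : 0 < Real.log (1/ε)) :
    (nuGauss r ε)^(r+2) = Real.sqrt (ε / Real.log (1/ε)) := by
  rw [nuGauss, ← Real.rpow_natCast ((ε / Real.log (1/ε)) ^ ((1:ℝ)/(2*(r+2)))) (r+2),
    ← Real.rpow_mul (le_of_lt (div_pos hε0 hL0)), Real.sqrt_eq_rpow]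
  congr 1
  push_cast
  have : ((r:ℝ)+2) ≠ 0 := by positivity
  field_simp

lemma sqrt_epsL_le_nu (r : ℕ) {ε : ℝ} (hε0 : 0 < ε) (hL1 : 1 ≤ Real.log (1/ε))
    (hE4 : (nuGauss r ε)^(r+1) * Real.log (1/ε) ≤ 1) :
    Real.sqrt (ε * Real.log (1/ε)) ≤ nuGauss r ε := by
  set L := Real.log (1/ε)
  have hL0 : 0 < L := by linarith
  obtain ⟨hν0, -, -⟩ := nu_facts r hε0 hL1
  have h1 : ε * L = (ε / L) * L^2 := by field_simp
  have h2 : Real.sqrt (ε * L) = Real.sqrt (ε / L) * L := by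
    rw [h1, Real.sqrt_mul (div_nonneg hε0.le hL0.le), Real.sqrt_sq hL0.le]
  rw [h2, ← nu_pow_r2 r hε0 hL0]
  calc (nuGauss r ε)^(r+2) * L = nuGauss r ε * ((nuGauss r ε)^(r+1) * L) := by ring
  _ ≤ nuGauss r ε * 1 := mul_le_mul_of_nonneg_left hE4 hν0.le
  _ = nuGauss r ε := mul_one _

lemma Mbig_le (r : ℕ) {ε : ℝ} (hε0 : 0 < ε) (hε1 : ε < 1) (hL1 : 1 ≤ Real.log (1/ε))
    (hν12 : nuGauss r ε ≤ 1/2)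
    (hE4 : (nuGauss r ε)^(r+1) * Real.log (1/ε) ≤ 1) :
    Mbig (gaussQinv ε) r (nuGauss r ε) ≤ Cc r * nuGauss r ε := by
  set L := Real.log (1/ε) with hL_def
  have hL0 : 0 < L := by linarith
  obtain ⟨hν0, hνlog1, hνlog2⟩ := nu_facts r hε0 hL1
  set ν := nuGauss r ε with hν_def
  have hCν : 0 ≤ Cc r * ν := mul_nonneg (Cc_pos r).le hν0.le
  refine Real.sSup_le ?_ hCν
  rintro y ⟨l, hl, w, hw, rfl⟩
  have hνw : ν ≤ w := hw.1
  have hw2 : w ≤ 1/2 := hw.2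
  have hw0 : 0 < w := lt_of_lt_of_le hν0 hνw
  have hw1 : w < 1 := lt_of_le_of_lt hw2 (by norm_num)
  have hwIoo : w ∈ Set.Ioo (0:ℝ) 1 := ⟨hw0, hw1⟩
  have hu : 0 < -Real.log w := by have := Real.log_neg hw0 hw1; linarith
  have hl2d : (0.6931471803 : ℝ) < Real.log 2 := Real.log_two_gt_d9
  have hulog2 : Real.log 2 ≤ -Real.log w := by
    rw [← Real.log_inv]
    refine Real.log_le_log (by norm_num) ?_
    rw [le_inv_comm₀ (by norm_num) hw0]; linarith
  have hνle1 : ν ≤ 1 := le_trans hν12 (by norm_num)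
  -- the value of η-type bound for the l = 0 case
  have hQw : gaussQinv ε w ≤ Cc r * ν := by
    have h1 : gaussQinv ε w ≤ Real.sqrt (ε * L) := by
      unfold gaussQinv
      apply Real.sqrt_le_sqrt
      apply mul_le_mul_of_nonneg_left ?_ hε0.le
      calc Real.log (1/w) ≤ Real.log (1/ν) := by
            apply Real.log_le_log (by positivity)
            exact one_div_le_one_div_of_le hν0 hνw
      _ ≤ L := hνlog2
    refine le_trans h1 (le_trans (sqrt_epsL_le_nu r hε0 hL1 hE4) ?_)
    exact le_mul_of_one_le_left hν0.le (one_le_Cc r)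
  cases l with
  | zero =>
    rw [iteratedDeriv_zero]
    rw [show |gaussQinv ε w| = gaussQinv ε w from abs_of_nonneg (Real.sqrt_nonneg _)]
    exact hQw
  | succ k =>
    have hkr : k ≤ r := by omega
    rw [iteratedDeriv_gaussQinv hε0 k w hwIoo]
    set u := -Real.log w with hu_def
    set s := Real.sqrt u with hs_def
    have hs0 : 0 < s := Real.sqrt_pos.mpr hu
    have huν : 0 < Real.log (1/ν) := lt_of_lt_of_le (by positivity) hνlog1
    set uν := Real.log (1/ν) with huν_def
    set sν := Real.sqrt uν with hsν_def
    have hsν0 : 0 < sν := Real.sqrt_pos.mpr huν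
    -- |eval| ≤ Kq r
    have hx2 : |u⁻¹| ≤ 2 := by
      rw [abs_of_nonneg (by positivity)]
      have h12 : (1:ℝ)/2 ≤ u := by linarith
      calc u⁻¹ ≤ ((1:ℝ)/2)⁻¹ := by
            apply inv_anti₀ (by norm_num) h12
      _ = 2 := by norm_num
    have hA : |(qp k).eval u⁻¹| ≤ Kq r := by
      refine le_trans (abs_eval_le (qp k) u⁻¹ hx2) ?_
      unfold Kq
      refine Finset.single_le_sum (f := fun k =>
        ∑ j ∈ Finset.range ((qp k).natDegree+1), |(qp k).coeff j| * 2^j) ?_ ?_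
      · intro i _; exact Finset.sum_nonneg fun j _ => by positivity
      · exact Finset.mem_range.mpr (by omega)
    -- denominator monotonicity
    have hden : ν^(r+1) * sν ≤ w^(k+1) * s := by
      have hmono := (mono_wu (k+1) (by omega)).monotoneOn
        ⟨hν0, hν12⟩ ⟨hw0, hw2⟩ hνw
      have huν_eq : -Real.log ν = uν := by rw [huν_def, one_div, Real.log_inv]
      have hsq1 : (ν^(k+1) * sν)^2 = ν^(2*(k+1)) * uν := by
        rw [mul_pow, ← pow_mul, Real.sq_sqrt huν.le]; ring_nf
      have hsq2 : (w^(k+1) * s)^2 = w^(2*(k+1)) * u := by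
        rw [mul_pow, ← pow_mul, Real.sq_sqrt hu.le]; ring_nf
      have hb1 : (0:ℝ) ≤ ν^(k+1) * sν := by positivity
      have hb2 : (0:ℝ) ≤ w^(k+1) * s := by positivity
      have step1 : ν^(k+1) * sν ≤ w^(k+1) * s := by
        rw [← Real.sqrt_sq hb1, ← Real.sqrt_sq hb2]
        apply Real.sqrt_le_sqrt
        rw [hsq1, hsq2]
        rw [huν_eq] at hmono
        exact hmono
      refine le_trans ?_ step1
      apply mul_le_mul_of_nonneg_right ?_ hsν0.le
      exact pow_le_pow_of_le_one hν0.le hνle1 (by omega)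
    -- putting it together
    have habs : |Real.sqrt ε * (qp k).eval u⁻¹ / (w^(k+1) * s)|
        = Real.sqrt ε * |(qp k).eval u⁻¹| / (w^(k+1) * s) := by
      rw [abs_div, abs_mul, abs_of_nonneg (Real.sqrt_nonneg ε),
        abs_of_pos (by positivity : (0:ℝ) < w^(k+1) * s)]
    rw [habs]
    have hstep : Real.sqrt ε * |(qp k).eval u⁻¹| / (w^(k+1) * s)
        ≤ Real.sqrt ε * Kq r / (ν^(r+1) * sν) := by
      gcongr <;>
        first
          | exact mul_nonneg (Real.sqrt_nonneg ε) (Kq_nonneg r)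
          | exact mul_pos (pow_pos hν0 _) hsν0
          | exact hA
          | exact hden
          | positivity
    refine le_trans hstep ?_
    -- now estimate √ε * Kq / (ν^(r+1) * sν)
    have hsν_ge : Real.sqrt L / Real.sqrt (2*((r:ℝ)+2)) ≤ sν := by
      rw [hsν_def, ← Real.sqrt_div hL0.le]
      exact Real.sqrt_le_sqrt hνlog1
    have hstep2 : Real.sqrt ε * Kq r / (ν^(r+1) * sν)
        ≤ Real.sqrt ε * Kq r / (ν^(r+1) * (Real.sqrt L / Real.sqrt (2*((r:ℝ)+2)))) := by
      gcongr <;>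
        first
          | exact mul_nonneg (Real.sqrt_nonneg ε) (Kq_nonneg r)
          | exact mul_pos (pow_pos hν0 _)
              (div_pos (Real.sqrt_pos.mpr hL0) (Real.sqrt_pos.mpr (by positivity)))
          | exact hsν_ge
          | positivity
    refine le_trans hstep2 ?_
    have hid : Real.sqrt ε * Kq r / (ν^(r+1) * (Real.sqrt L / Real.sqrt (2*((r:ℝ)+2))))
        = (Kq r * Real.sqrt (2*((r:ℝ)+2))) * ((Real.sqrt ε / Real.sqrt L) / ν^(r+1)) := by
      have h1 : Real.sqrt L ≠ 0 := (Real.sqrt_pos.mpr hL0).ne'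
      have h2 : Real.sqrt (2*((r:ℝ)+2)) ≠ 0 := by
        apply ne_of_gt; apply Real.sqrt_pos.mpr; positivity
      have h3 : ν^(r+1) ≠ 0 := (pow_pos hν0 _).ne'
      field_simp
    rw [hid]
    have hkey : Real.sqrt ε / Real.sqrt L = ν^(r+2) := by
      rw [← Real.sqrt_div hε0.le, ← nu_pow_r2 r hε0 hL0]
    rw [hkey]
    have hpowdiv : ν^(r+2) / ν^(r+1) = ν := by
      rw [pow_succ]
      field_simp
    rw [hpowdiv]
    apply mul_le_mul_of_nonneg_right ?_ hν0.le
    have hsqr : (0:ℝ) ≤ Real.sqrt (2*((r:ℝ)+2)) := Real.sqrt_nonneg _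
    have : Real.sqrt (2*((r:ℝ)+2)) = Real.sqrt (2*(r+2)) := by norm_num
    rw [this]
    unfold Cc
    nlinarith [Kq_nonneg r, Real.sqrt_nonneg (2*((r:ℕ):ℝ)+4)]

lemma W_le (r : ℕ) {ε : ℝ} (hε0 : 0 < ε) (hε1 : ε < 1) (hL1 : 1 ≤ Real.log (1/ε))
    (hE5 : (Kp r + 1) * ((r:ℝ)+2)^(r+1) * (Real.log (1/ε))^(r+1) * ε ≤ nuGauss r ε)
    {l : ℕ} (hl1 : 1 ≤ l) (hlr : l ≤ r + 1) :
    |iteratedDeriv l (gaussW ε) (deltaGauss r ε)| ≤ Cc r * nuGauss r ε := by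
  set L := Real.log (1/ε) with hL_def
  have hL0 : 0 < L := by linarith
  obtain ⟨hν0, -, -⟩ := nu_facts r hε0 hL1
  have hse : 0 < Real.sqrt ε := Real.sqrt_pos.mpr hε0
  have hrL : (0:ℝ) ≤ ((r:ℝ)+2) * L := by positivity
  have ht_eq : deltaGauss r ε / Real.sqrt ε = Real.sqrt (((r:ℝ)+2)*L) := by
    rw [deltaGauss, show ((r:ℝ)+2)*ε*L = ε * (((r:ℝ)+2)*L) by ring,
      Real.sqrt_mul hε0.le]
    exact mul_div_cancel_left₀ _ hse.ne'
  rw [iteratedDeriv_gaussW hε0 l (deltaGauss r ε), ht_eq]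
  set t := Real.sqrt (((r:ℝ)+2)*L) with ht_def
  have hrL1 : (1:ℝ) ≤ ((r:ℝ)+2)*L := by nlinarith [Nat.cast_nonneg (α := ℝ) r]
  have ht1 : 1 ≤ t := Real.one_le_sqrt.mpr hrL1
  have hexp : Real.exp (-t^2) = ε^(r+2) := by
    rw [Real.sq_sqrt hrL]
    have hLeq : L = -Real.log ε := by rw [hL_def, one_div, Real.log_inv]
    rw [hLeq, show -(((r:ℝ)+2) * -Real.log ε) = ((r+2 : ℕ) : ℝ) * Real.log ε by push_cast; ring]
    rw [Real.exp_nat_mul, Real.exp_log hε0]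
  have habs : |(Real.sqrt ε)⁻¹^l * (hpPoly l).eval t * Real.exp (-t^2)|
      = (Real.sqrt ε)⁻¹^l * |(hpPoly l).eval t| * Real.exp (-t^2) := by
    rw [abs_mul, abs_mul, abs_of_pos (by positivity : (0:ℝ) < (Real.sqrt ε)⁻¹^l),
      abs_of_pos (Real.exp_pos _)]
  rw [habs, hexp]
  -- eval bound
  have hSl : (∑ j ∈ Finset.range ((hpPoly l).natDegree+1), |(hpPoly l).coeff j|) ≤ Kp r := by
    unfold Kp
    refine Finset.single_le_sum (f := fun l =>
      ∑ j ∈ Finset.range ((hpPoly l).natDegree+1), |(hpPoly l).coeff j|) ?_ ?_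
    · intro i _; exact Finset.sum_nonneg fun j _ => abs_nonneg _
    · exact Finset.mem_range.mpr (by omega)
  have hA : |(hpPoly l).eval t| ≤ Kp r * t^(r+1) := by
    refine le_trans (abs_eval_le_of_one_le (hpPoly l) t ht1 (r+1)
      (le_trans (natDegree_hpPoly l) hlr)) ?_
    exact mul_le_mul_of_nonneg_right hSl (by positivity)
  -- inv pow bound
  have hinv1 : (1:ℝ) ≤ (Real.sqrt ε)⁻¹ := by
    rw [one_le_inv₀ hse]
    exact Real.sqrt_le_one.mpr hε1.le
  have hinvpow : (Real.sqrt ε)⁻¹^l ≤ (Real.sqrt ε)⁻¹^(r+1) := pow_le_pow_right₀ hinv1 hlr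
  have hstep : (Real.sqrt ε)⁻¹^l * |(hpPoly l).eval t| * ε^(r+2)
      ≤ (Real.sqrt ε)⁻¹^(r+1) * (Kp r * t^(r+1)) * ε^(r+2) := by
    have h1 : (Real.sqrt ε)⁻¹^l * |(hpPoly l).eval t| ≤ (Real.sqrt ε)⁻¹^(r+1) * (Kp r * t^(r+1)) :=
      mul_le_mul hinvpow hA (abs_nonneg _) (by positivity)
    exact mul_le_mul_of_nonneg_right h1 (by positivity)
  refine le_trans hstep ?_
  -- rewrite as ((r+2)L/ε)^((r+1)/2-ish) * ε^(r+2)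
  have hcomb : (Real.sqrt ε)⁻¹^(r+1) * (Kp r * t^(r+1)) * ε^(r+2)
      = Kp r * (Real.sqrt (((r:ℝ)+2)*L/ε))^(r+1) * ε^(r+2) := by
    rw [Real.sqrt_div hrL ε, div_pow, ht_def]
    field_simp
    rw [one_div, inv_pow]
    field_simp [hse.ne']
  rw [hcomb]
  have hB1 : (1:ℝ) ≤ ((r:ℝ)+2)*L/ε := by
    rw [le_div_iff₀ hε0]
    nlinarith
  have hsB : Real.sqrt (((r:ℝ)+2)*L/ε) ≤ ((r:ℝ)+2)*L/ε := by
    nth_rewrite 2 [← Real.sqrt_sq (by linarith : (0:ℝ) ≤ ((r:ℝ)+2)*L/ε)]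
    apply Real.sqrt_le_sqrt
    nlinarith
  have hstep2 : Kp r * (Real.sqrt (((r:ℝ)+2)*L/ε))^(r+1) * ε^(r+2)
      ≤ Kp r * (((r:ℝ)+2)*L/ε)^(r+1) * ε^(r+2) := by
    have := pow_le_pow_left₀ (Real.sqrt_nonneg _) hsB (r+1)
    have h2 := mul_le_mul_of_nonneg_left this (Kp_nonneg r)
    exact mul_le_mul_of_nonneg_right h2 (by positivity)
  refine le_trans hstep2 ?_
  have hcomb2 : Kp r * (((r:ℝ)+2)*L/ε)^(r+1) * ε^(r+2)
      = Kp r * ((r:ℝ)+2)^(r+1) * L^(r+1) * ε := by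
    rw [div_pow, mul_pow, pow_succ ε (r+1)]
    field_simp
  rw [hcomb2]
  have hfinal : Kp r * ((r:ℝ)+2)^(r+1) * L^(r+1) * ε
      ≤ (Kp r + 1) * ((r:ℝ)+2)^(r+1) * L^(r+1) * ε := by
    have : Kp r ≤ Kp r + 1 := by linarith
    have hnn : (0:ℝ) ≤ ((r:ℝ)+2)^(r+1) * L^(r+1) * ε := by positivity
    nlinarith [Kp_nonneg r]
  refine le_trans hfinal (le_trans hE5 ?_)
  exact le_mul_of_one_le_left hν0.le (one_le_Cc r)

lemma ev_E4 (r : ℕ) : ∀ᶠ ε in 𝓝[>] (0:ℝ),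
    (nuGauss r ε)^(r+1) * Real.log (1/ε) ≤ 1 := by
  have hc : (0:ℝ) < (1/(2*((r:ℝ)+2))) * (r+1) := by positivity
  have T := tendsto_key ((1/(2*((r:ℝ)+2))) * (r+1)) (1 - (1/(2*((r:ℝ)+2))) * (r+1)) hc
  have T2 : Tendsto (fun ε : ℝ => (nuGauss r ε)^(r+1) * Real.log (1/ε)) (𝓝[>] (0:ℝ)) (𝓝 0) := by
    refine T.congr' ?_
    filter_upwards [ev_Ioo] with ε hε
    obtain ⟨hε0, hε1, hL1⟩ := basic_facts hε
    set L := Real.log (1/ε)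
    have hL0 : 0 < L := by linarith
    set c : ℝ := (1/(2*((r:ℝ)+2))) with hc_def
    have h1 : nuGauss r ε = ε^c * L^(-c) := nu_eq hε0 hL0
    rw [h1, mul_pow, ← Real.rpow_natCast (ε^c) (r+1), ← Real.rpow_natCast (L^(-c)) (r+1),
      ← Real.rpow_mul hε0.le, ← Real.rpow_mul hL0.le]
    rw [mul_assoc, ← Real.rpow_one L]
    rw [show ((L^(1:ℝ))^(-c * ((r+1:ℕ):ℝ)) * L^(1:ℝ) : ℝ)
        = L^(-c * ((r+1:ℕ):ℝ)) * L^(1:ℝ) by rw [Real.rpow_one]]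
    rw [← Real.rpow_add hL0]
    rw [Real.rpow_one]
    push_cast
    ring_nf
  exact T2.eventually (eventually_le_nhds (by norm_num))

lemma ev_E5 (r : ℕ) : ∀ᶠ ε in 𝓝[>] (0:ℝ),
    (Kp r + 1) * ((r:ℝ)+2)^(r+1) * (Real.log (1/ε))^(r+1) * ε ≤ nuGauss r ε := by
  set c : ℝ := (1/(2*((r:ℝ)+2))) with hc_def
  have hc0 : 0 < c := by positivity
  have hc1 : c < 1 := by
    rw [hc_def, div_lt_one (by positivity)]
    nlinarith [Nat.cast_nonneg (α := ℝ) r]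
  set A : ℝ := (Kp r + 1) * ((r:ℝ)+2)^(r+1) with hA_def
  have hA0 : 0 < A := by
    have := Kp_nonneg r
    positivity
  have T := (tendsto_key (1-c) (((r:ℝ)+1)+c) (by linarith)).const_mul A
  rw [mul_zero] at T
  have hev := T.eventually (eventually_le_nhds (by norm_num : (0:ℝ) < 1))
  filter_upwards [hev, ev_Ioo] with ε h1 hε
  obtain ⟨hε0, hε1, hL1⟩ := basic_facts hε
  set L := Real.log (1/ε)
  have hL0 : 0 < L := by linarith
  have hν0 : 0 < nuGauss r ε := Real.rpow_pos_of_pos (div_pos hε0 hL0) _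
  have hident : A * L^(r+1) * ε
      = (A * (ε^(1-c) * L^(((r:ℝ)+1)+c))) * (ε^c * L^(-c)) := by
    rw [mul_assoc A, mul_assoc A]
    congr 1
    rw [show (ε^(1-c) * L^(((r:ℝ)+1)+c)) * (ε^c * L^(-c))
        = (ε^(1-c) * ε^c) * (L^(((r:ℝ)+1)+c) * L^(-c)) by ring,
      ← Real.rpow_add hε0, ← Real.rpow_add hL0]
    rw [show (1-c) + c = (1:ℝ) by ring, show (((r:ℝ)+1)+c) + (-c) = ((r:ℝ)+1) by ring]
    rw [Real.rpow_one, show ((r:ℝ)+1) = ((r+1 : ℕ):ℝ) by push_cast; ring, Real.rpow_natCast]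
    ring
  rw [hident, ← nu_eq hε0 hL0]
  calc A * (ε^(1-c) * L^(((r:ℝ)+1)+c)) * nuGauss r ε ≤ 1 * nuGauss r ε :=
        mul_le_mul_of_nonneg_right h1 hν0.le
  _ = nuGauss r ε := one_mul _

lemma eta_tendsto (r : ℕ) : Tendsto (etaGauss r) (𝓝[>] (0:ℝ)) (𝓝 0) := by
  refine squeeze_zero' (Eventually.of_forall fun ε => Real.sqrt_nonneg _) ?_ sqrt_epsL_tendsto
  filter_upwards [ev_Ioo] with ε hε
  obtain ⟨hε0, hε1, hL1⟩ := basic_facts hε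
  exact eta_le r hε0 hL1

end AuxStmt7

/-- **Error estimates for the Gaussian barrier `W(Q;ε) = e^{-Q²/ε}`.**
With `ν(ε) = (ε/ln(1/ε))^{1/(2(r+2))}` and `δ(ε) = √((r+2) ε ln(1/ε))`, eventually
`M^{(r)}(ν(ε);ε) ≤ C ν(ε)`, all the derivatives `∂_Q^l W(δ(ε);ε)`, `1 ≤ l ≤ r+1`, are
bounded by `C ν(ε)`, and `η(ε) ≤ √(ε ln(1/ε))`. In particular `ν, δ, η → 0` as `ε → 0⁺`. -/
theorem stmt_7 (r : ℕ) (hr : 1 ≤ r) :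
    (∃ C > (0:ℝ), ∃ ε₀ ∈ Set.Ioo (0:ℝ) 1, ∀ ε ∈ Set.Ioo (0:ℝ) ε₀,
      Mbig (gaussQinv ε) r (nuGauss r ε) ≤ C * nuGauss r ε ∧
      (∀ l : ℕ, 1 ≤ l → l ≤ r + 1 →
        |iteratedDeriv l (gaussW ε) (deltaGauss r ε)| ≤ C * nuGauss r ε) ∧
      etaGauss r ε ≤ Real.sqrt (ε * Real.log (1 / ε))) ∧
    Tendsto (nuGauss r) (𝓝[>] (0:ℝ)) (𝓝 0) ∧
    Tendsto (deltaGauss r) (𝓝[>] (0:ℝ)) (𝓝 0) ∧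
    Tendsto (etaGauss r) (𝓝[>] (0:ℝ)) (𝓝 0) := by
  refine ⟨?_, nu_tendsto r, delta_tendsto r, eta_tendsto r⟩
  have hbundle : ∀ᶠ ε in 𝓝[>] (0:ℝ),
      (Mbig (gaussQinv ε) r (nuGauss r ε) ≤ Cc r * nuGauss r ε ∧
      (∀ l : ℕ, 1 ≤ l → l ≤ r + 1 →
        |iteratedDeriv l (gaussW ε) (deltaGauss r ε)| ≤ Cc r * nuGauss r ε) ∧
      etaGauss r ε ≤ Real.sqrt (ε * Real.log (1 / ε))) := by
    have hν12ev : ∀ᶠ ε in 𝓝[>] (0:ℝ), nuGauss r ε ≤ 1/2 :=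
      (nu_tendsto r).eventually (eventually_le_nhds (by norm_num))
    filter_upwards [ev_Ioo, hν12ev, ev_E4 r, ev_E5 r] with ε hε hν12 hE4 hE5
    obtain ⟨hε0, hε1, hL1⟩ := basic_facts hε
    exact ⟨Mbig_le r hε0 hε1 hL1 hν12 hE4,
      fun l hl1 hlr => W_le r hε0 hε1 hL1 hE5 hl1 hlr,
      eta_le r hε0 hL1⟩
  obtain ⟨u, hu, hsub⟩ := mem_nhdsGT_iff_exists_Ioo_subset.mp hbundle
  have hu0 : 0 < u := hu
  refine ⟨Cc r, Cc_pos r, min u 1 / 2, ⟨by positivity, ?_⟩, fun ε hε => ?_⟩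
  · have : min u 1 ≤ 1 := min_le_right _ _
    linarith
  · apply hsub
    constructor
    · exact hε.1
    · have h1 : ε < min u 1 / 2 := hε.2
      have h2 : min u 1 ≤ u := min_le_left _ _
      linarith
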